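/- arXiv:1410.8349 — 3 statements merged into one kernel-verified Lean document; each statement's English description precedes it below -/
import Mathlib

section
/- For any digraph G and integers s,t ≥ 1, the maximum winning probability of the guessing game on G(t) with alphabet size s equals the maximum winning probability of the guessing game on G with alphabet size s^t; equivalently gn(G(t),s) = t·gn(G,s^t). -/
/-- A pure strategy for the guessing game on the digraph with edge relation `E`
and alphabet `Fin s`: each player `v` guesses based only on the values of its
in-neighbours. -/
structure GuessStrategy (V : Type*) (E : V → V → Prop) (s : ℕ) where
  f : V → (V → Fin s) → Fin s
  local_dep : ∀ v a b, (∀ u, E u v → a u = b u) → f v a = f v b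

/-- The number of assignments on which every player guesses correctly. -/
noncomputable def winCount {V : Type*} [Fintype V] (E : V → V → Prop) (s : ℕ)
    (F : GuessStrategy V E s) : ℕ :=
  Nat.card {a : V → Fin s // ∀ v, F.f v a = a v}

/-- The winning probability of strategy `F` in the guessing game `(G,s)`. -/
noncomputable def winP {V : Type*} [Fintype V] (E : V → V → Prop) (s : ℕ)
    (F : GuessStrategy V E s) : ℝ :=
  (winCount E s F : ℝ) / (s ^ Fintype.card V : ℕ)

/-- The maximum winning probability over all strategies. -/
noncomputable def maxWinP {V : Type*} [Fintype V] (E : V → V → Prop) (s : ℕ) : ℝ :=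
  ⨆ F : GuessStrategy V E s, winP E s F

/-- The guessing number `gn(G,s) = |V(G)| + log_s (max winning probability)`. -/
noncomputable def gn {V : Type*} [Fintype V] (E : V → V → Prop) (s : ℕ) : ℝ :=
  Fintype.card V + Real.logb s (maxWinP E s)

/-- The `t`-uniform blowup of a digraph: each vertex is replaced by `t` copies. -/
def blowup {V : Type*} (E : V → V → Prop) (t : ℕ) : V × Fin t → V × Fin t → Prop :=
  fun p q => E p.1 q.1

namespace BlowupAux

variable {V : Type*}

theorem GuessStrategy.ext' {E : V → V → Prop} {s : ℕ} {F G : GuessStrategy V E s}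
    (h : F.f = G.f) : F = G := by
  cases F; cases G; simp_all

/-- Assignments on the blowup correspond to assignments on the base with alphabet `s^t`. -/
def aEquiv (V : Type*) (s t : ℕ) : (V × Fin t → Fin s) ≃ (V → Fin (s ^ t)) :=
  (Equiv.curry V (Fin t) (Fin s)).trans (Equiv.piCongrRight fun _ => finFunctionFinEquiv)

@[simp] lemma aEquiv_apply (s t : ℕ) (a : V × Fin t → Fin s) (v : V) :
    aEquiv V s t a v = finFunctionFinEquiv (fun i => a (v, i)) := rfl

@[simp] lemma aEquiv_symm_apply (s t : ℕ) (b : V → Fin (s ^ t)) (p : V × Fin t) :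
    (aEquiv V s t).symm b p = finFunctionFinEquiv.symm (b p.1) p.2 := rfl

/-- Transport a strategy on the blowup to a strategy on the base graph. -/
def toBase (E : V → V → Prop) (s t : ℕ)
    (F : GuessStrategy (V × Fin t) (blowup E t) s) : GuessStrategy V E (s ^ t) where
  f v b := finFunctionFinEquiv (fun i => F.f (v, i) ((aEquiv V s t).symm b))
  local_dep v a b h := by
    refine congrArg _ (funext fun i => ?_)
    apply F.local_dep
    rintro ⟨u, j⟩ hu
    simp only [aEquiv_symm_apply]
    rw [h u hu]

/-- Transport a strategy on the base graph to a strategy on the blowup. -/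
def toBlowup (E : V → V → Prop) (s t : ℕ)
    (F : GuessStrategy V E (s ^ t)) : GuessStrategy (V × Fin t) (blowup E t) s where
  f p a := finFunctionFinEquiv.symm (F.f p.1 (aEquiv V s t a)) p.2
  local_dep := by
    rintro ⟨v, i⟩ a b h
    have key : F.f v (aEquiv V s t a) = F.f v (aEquiv V s t b) := by
      apply F.local_dep
      intro u hu
      simp only [aEquiv_apply]
      congr 1
      funext j
      exact h (u, j) hu
    simp [key]

lemma toBase_toBlowup (E : V → V → Prop) (s t : ℕ) (F : GuessStrategy V E (s ^ t)) :
    toBase E s t (toBlowup E s t F) = F := by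
  apply GuessStrategy.ext'
  funext v b
  simp [toBase, toBlowup]

lemma toBase_surjective (E : V → V → Prop) (s t : ℕ) :
    Function.Surjective (toBase E s t (V := V)) :=
  fun F => ⟨toBlowup E s t F, toBase_toBlowup E s t F⟩

variable [Fintype V]

lemma winCount_toBase (E : V → V → Prop) (s t : ℕ)
    (F : GuessStrategy (V × Fin t) (blowup E t) s) :
    winCount E (s ^ t) (toBase E s t F) = winCount (blowup E t) s F := by
  unfold winCount
  apply Nat.card_congr
  refine (Equiv.subtypeEquiv (aEquiv V s t) ?_).symm
  intro a
  have key : ∀ v : V,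
      (toBase E s t F).f v (aEquiv V s t a) = aEquiv V s t a v ↔
        ∀ i, F.f (v, i) a = a (v, i) := by
    intro v
    have h1 : (toBase E s t F).f v (aEquiv V s t a)
        = finFunctionFinEquiv (fun i => F.f (v, i) a) := by
      simp [toBase]
    rw [h1, aEquiv_apply, Equiv.apply_eq_iff_eq, funext_iff]
  constructor
  · intro h v
    rw [key v]
    intro i
    exact h (v, i)
  · intro h p
    exact (key p.1).1 (h p.1) p.2

lemma winP_toBase (E : V → V → Prop) (s t : ℕ)
    (F : GuessStrategy (V × Fin t) (blowup E t) s) :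
    winP E (s ^ t) (toBase E s t F) = winP (blowup E t) s F := by
  unfold winP
  rw [winCount_toBase]
  congr 2
  rw [Fintype.card_prod, Fintype.card_fin, ← pow_mul, mul_comm]

end BlowupAux

/-- For any (loopless) digraph `G` and integers `s, t ≥ 1`, the maximum
winning probability on the `t`-uniform blowup `G(t)` with alphabet size `s` equals that
on `G` with alphabet size `s^t`; equivalently `gn(G(t),s) = t·gn(G,s^t)`. -/
theorem blowup_maxWinP_eq {V : Type*} [Fintype V] (E : V → V → Prop) (hE : Irreflexive E)
    (s t : ℕ) (hs : 1 ≤ s) (ht : 1 ≤ t) :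
    maxWinP (blowup E t) s = maxWinP E (s ^ t) ∧
    gn (blowup E t) s = t * gn E (s ^ t) := by
  have hmax : maxWinP (blowup E t) s = maxWinP E (s ^ t) := by
    unfold maxWinP
    rw [← (BlowupAux.toBase_surjective E s t).iSup_comp (g := fun F => winP E (s ^ t) F)]
    exact iSup_congr fun F => (BlowupAux.winP_toBase E s t F).symm
  refine ⟨hmax, ?_⟩
  unfold gn
  rw [hmax, Fintype.card_prod, Fintype.card_fin]
  have ht' : (t : ℝ) ≠ 0 := by positivity
  have hlog : Real.logb s (maxWinP E (s ^ t)) = t * Real.logb (s ^ t) (maxWinP E (s ^ t)) := by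
    unfold Real.logb
    push_cast
    rw [Real.log_pow]
    by_cases h : Real.log s = 0
    · simp [h]
    · field_simp
  rw [hlog]
  push_cast
  ring
end

section
/- For any digraph G, integer t ≥ s ≥ 2, the guessing number satisfies gn(G,t) ≥ (⌊log_s t⌋ / log_s t)·gn(G,s). Consequently, for every ε > 0 there exists t_0 such that gn(G,t) ≥ gn(G,s) − ε for all t ≥ t_0. -/
section Aux

variable {V : Type*} [Fintype V] (E : V → V → Prop)

lemma winCount_le_pow (s : ℕ) (F : GuessStrategy V E s) :
    winCount E s F ≤ s ^ Fintype.card V := by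
  classical
  calc winCount E s F ≤ Nat.card (V → Fin s) :=
        Nat.card_le_card_of_injective _ Subtype.val_injective
    _ = s ^ Fintype.card V := by
        rw [Nat.card_fun]
        simp

lemma winP_nonneg (s : ℕ) (F : GuessStrategy V E s) : 0 ≤ winP E s F := by
  unfold winP; positivity

lemma winP_le_one (s : ℕ) (hs : 1 ≤ s) (F : GuessStrategy V E s) : winP E s F ≤ 1 := by
  unfold winP
  rw [div_le_one (by positivity)]
  exact_mod_cast winCount_le_pow E s F

lemma bddAbove_winP (s : ℕ) (hs : 1 ≤ s) :
    BddAbove (Set.range (winP E s)) := by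
  refine ⟨1, ?_⟩
  rintro x ⟨F, rfl⟩
  exact winP_le_one E s hs F

instance (s : ℕ) [NeZero s] : Nonempty (GuessStrategy V E s) :=
  ⟨⟨fun _ _ => 0, fun _ _ _ _ => rfl⟩⟩

lemma winP_le_maxWinP (s : ℕ) (hs : 1 ≤ s) (F : GuessStrategy V E s) :
    winP E s F ≤ maxWinP E s :=
  le_ciSup (bddAbove_winP E s hs) F

lemma maxWinP_le_one (s : ℕ) (hs : 1 ≤ s) : maxWinP E s ≤ 1 := by
  have : NeZero s := ⟨by omega⟩
  exact ciSup_le fun F => winP_le_one E s hs F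

lemma one_le_winCount (s : ℕ) (hs : 1 ≤ s) (F : GuessStrategy V E s)
    (hwin : ∃ a : V → Fin s, ∀ v, F.f v a = a v) : 1 ≤ winCount E s F := by
  classical
  have : Nonempty {a : V → Fin s // ∀ v, F.f v a = a v} := by
    obtain ⟨a, ha⟩ := hwin
    exact ⟨⟨a, ha⟩⟩
  exact Nat.card_pos

lemma inv_pow_le_maxWinP (s : ℕ) (hs : 1 ≤ s) :
    ((s : ℝ) ^ Fintype.card V)⁻¹ ≤ maxWinP E s := by
  have : NeZero s := ⟨by omega⟩
  have h0 : (0 : Fin s) = 0 := rfl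
  set F0 : GuessStrategy V E s := ⟨fun _ _ => 0, fun _ _ _ _ => rfl⟩
  have h1 : 1 ≤ winCount E s F0 :=
    one_le_winCount E s hs F0 ⟨fun _ => 0, fun _ => rfl⟩
  refine le_trans ?_ (winP_le_maxWinP E s hs F0)
  unfold winP
  rw [inv_le_iff_one_le_mul₀ (by positivity), div_mul_eq_mul_div, mul_comm,
    ← div_mul_eq_mul_div]
  push_cast
  rw [div_self (by positivity), one_mul]
  exact_mod_cast h1

lemma maxWinP_pos (s : ℕ) (hs : 1 ≤ s) : 0 < maxWinP E s :=
  lt_of_lt_of_le (by positivity) (inv_pow_le_maxWinP E s hs)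

end Aux

section Pow

variable {V : Type*} [Fintype V] (E : V → V → Prop)

/-- lift a strategy over `Fin s` to one over `Fin (s^k)` acting coordinatewise. -/
noncomputable def powStrategy (s k : ℕ) (F : GuessStrategy V E s) :
    GuessStrategy V E (s ^ k) where
  f v a := finFunctionFinEquiv (fun i => F.f v (fun u => finFunctionFinEquiv.symm (a u) i))
  local_dep v a b h :=
    congrArg finFunctionFinEquiv
      (funext fun i => F.local_dep v _ _ fun u hu => by rw [h u hu])

lemma winCount_powStrategy (s k : ℕ) (F : GuessStrategy V E s) :
    winCount E (s ^ k) (powStrategy E s k F) = (winCount E s F) ^ k := by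
  classical
  unfold winCount
  have e : {a : V → Fin (s ^ k) // ∀ v, (powStrategy E s k F).f v a = a v} ≃
      (Fin k → {b : V → Fin s // ∀ v, F.f v b = b v}) := by
    refine
      { toFun := fun a i => ⟨fun v => finFunctionFinEquiv.symm (a.1 v) i, fun v => ?_⟩
        invFun := fun g => ⟨fun v => finFunctionFinEquiv (fun i => (g i).1 v), fun v => ?_⟩
        left_inv := fun a => ?_
        right_inv := fun g => ?_ }
    · have := a.2 v
      unfold powStrategy at this
      simp only at this
      have h2 : (fun i => F.f v (fun u => finFunctionFinEquiv.symm (a.1 u) i)) =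
          finFunctionFinEquiv.symm (a.1 v) := by
        rw [← this, Equiv.symm_apply_apply]
      exact congrFun h2 i
    · unfold powStrategy
      simp only
      rw [Equiv.apply_eq_iff_eq_symm_apply]
      funext i
      simp only [Equiv.symm_apply_apply]
      exact (g i).2 v
    · ext v; simp
    · ext i v; simp
  rw [Nat.card_congr e, Nat.card_fun]
  simp

lemma maxWinP_pow_le (s k : ℕ) (hs : 1 ≤ s) (hk : 1 ≤ k) :
    (maxWinP E s) ^ k ≤ maxWinP E (s ^ k) := by
  have hsk : 1 ≤ s ^ k := Nat.one_le_pow _ _ (by omega)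
  have hM : 0 < maxWinP E (s ^ k) := maxWinP_pos E _ hsk
  have : NeZero s := ⟨by omega⟩
  have key : ∀ F : GuessStrategy V E s, (winP E s F) ^ k ≤ maxWinP E (s ^ k) := by
    intro F
    have : winP E (s ^ k) (powStrategy E s k F) = (winP E s F) ^ k := by
      unfold winP
      rw [winCount_powStrategy, div_pow]
      push_cast
      rw [← pow_mul, ← pow_mul, Nat.mul_comm]
    rw [← this]
    exact winP_le_maxWinP E _ hsk _
  -- deduce (⨆ F, winP F)^k ≤ M via rpow
  have hk0 : (k : ℝ) ≠ 0 := by positivity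
  have hsup : maxWinP E s ≤ (maxWinP E (s ^ k)) ^ ((k : ℝ)⁻¹) := by
    refine ciSup_le fun F => ?_
    have h1 : winP E s F = ((winP E s F) ^ k) ^ ((k : ℝ)⁻¹) := by
      rw [← Real.rpow_natCast (winP E s F) k, ← Real.rpow_mul (winP_nonneg E s F),
        mul_inv_cancel₀ hk0, Real.rpow_one]
    rw [h1]
    exact Real.rpow_le_rpow (pow_nonneg (winP_nonneg E s F) k) (key F) (by positivity)
  calc (maxWinP E s) ^ k ≤ ((maxWinP E (s ^ k)) ^ ((k : ℝ)⁻¹)) ^ k :=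
        pow_le_pow_left₀ (maxWinP_pos E s hs).le hsup k
    _ = maxWinP E (s ^ k) := by
        rw [← Real.rpow_natCast ((maxWinP E (s ^ k)) ^ ((k : ℝ)⁻¹)) k,
          ← Real.rpow_mul hM.le, inv_mul_cancel₀ hk0, Real.rpow_one]

end Pow

section Trunc

variable {V : Type*} [Fintype V] (E : V → V → Prop)

/-- Restrict a strategy over alphabet `m` to one over alphabet `t ≥ m` by truncation. -/
noncomputable def truncStrategy (m t : ℕ) (hm : 0 < m) (hmt : m ≤ t)
    (F : GuessStrategy V E m) : GuessStrategy V E t where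
  f v a := Fin.castLE hmt
    (F.f v (fun u => if h : ((a u : Fin t) : ℕ) < m then ⟨a u, h⟩ else ⟨0, hm⟩))
  local_dep v a b h :=
    congrArg (Fin.castLE hmt) (F.local_dep v _ _ fun u hu => by rw [h u hu])

lemma winCount_le_truncStrategy (m t : ℕ) (hm : 0 < m) (hmt : m ≤ t)
    (F : GuessStrategy V E m) :
    winCount E m F ≤ winCount E t (truncStrategy E m t hm hmt F) := by
  classical
  unfold winCount
  refine Nat.card_le_card_of_injective
    (fun b => ⟨fun v => Fin.castLE hmt (b.1 v), fun v => ?_⟩) ?_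
  · show Fin.castLE hmt (F.f v _) = _
    have hb : (fun u => if h : ((Fin.castLE hmt (b.1 u) : Fin t) : ℕ) < m then
        (⟨(Fin.castLE hmt (b.1 u) : Fin t), h⟩ : Fin m) else ⟨0, hm⟩) = b.1 := by
      funext u
      have hlt : ((Fin.castLE hmt (b.1 u) : Fin t) : ℕ) < m := by
        simpa using (b.1 u).2
      rw [dif_pos hlt]
      exact Fin.ext (by simp)
    rw [hb, b.2 v]
  · intro x y hxy
    apply Subtype.ext
    funext v
    have := congrFun (congrArg Subtype.val hxy) v
    exact Fin.castLE_injective hmt this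

lemma maxWinP_mul_le (m t : ℕ) (hm : 1 ≤ m) (hmt : m ≤ t) :
    maxWinP E m * ((m : ℝ) ^ Fintype.card V / (t : ℝ) ^ Fintype.card V) ≤ maxWinP E t := by
  have : NeZero m := ⟨by omega⟩
  have ht1 : 1 ≤ t := le_trans hm hmt
  have hc : (0:ℝ) < (m : ℝ) ^ Fintype.card V / (t : ℝ) ^ Fintype.card V := by
    have hm0 : (0:ℝ) < (m:ℝ) := by exact_mod_cast hm
    have ht0 : (0:ℝ) < (t:ℝ) := by exact_mod_cast ht1
    positivity
  rw [← le_div_iff₀ hc]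
  refine ciSup_le fun F => ?_
  rw [le_div_iff₀ hc]
  have key : winP E m F * ((m : ℝ) ^ Fintype.card V / (t : ℝ) ^ Fintype.card V) ≤
      winP E t (truncStrategy E m t (by omega) hmt F) := by
    unfold winP
    have hcount := winCount_le_truncStrategy E m t (by omega) hmt F
    have hm0 : (0:ℝ) < (m:ℝ) ^ Fintype.card V := by
      have : (0:ℝ) < (m:ℝ) := by exact_mod_cast hm
      positivity
    have ht0 : (0:ℝ) < (t:ℝ) ^ Fintype.card V := by
      have : (0:ℝ) < (t:ℝ) := by exact_mod_cast ht1
      positivity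
    push_cast
    have heq : (winCount E m F : ℝ) / (m:ℝ) ^ Fintype.card V *
        ((m:ℝ) ^ Fintype.card V / (t:ℝ) ^ Fintype.card V) =
        (winCount E m F : ℝ) / (t:ℝ) ^ Fintype.card V := by
      field_simp
    rw [heq]
    gcongr
  exact key.trans (winP_le_maxWinP E t ht1 _)

end Trunc

section GnLemmas

variable {V : Type*} [Fintype V] (E : V → V → Prop)

lemma gn_nonneg (s : ℕ) (hs : 2 ≤ s) : 0 ≤ gn E s := by
  unfold gn
  have hs1 : (1:ℝ) < s := by exact_mod_cast hs
  have h := inv_pow_le_maxWinP E s (by omega)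
  have h2 : Real.logb s (((s:ℝ) ^ Fintype.card V)⁻¹) ≤ Real.logb s (maxWinP E s) :=
    Real.logb_le_logb_of_le hs1 (by positivity) h
  rw [Real.logb_inv, Real.logb_pow, Real.logb_self_eq_one hs1, mul_one] at h2
  linarith

lemma gn_le_card (s : ℕ) (hs : 2 ≤ s) : gn E s ≤ Fintype.card V := by
  unfold gn
  have hs1 : (1:ℝ) < s := by exact_mod_cast hs
  have := Real.logb_nonpos hs1 (maxWinP_pos E s (by omega)).le (maxWinP_le_one E s (by omega))
  linarith

lemma gn_pow_ge (s k : ℕ) (hs : 2 ≤ s) (hk : 1 ≤ k) : gn E s ≤ gn E (s ^ k) := by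
  have hs1 : (1:ℝ) < s := by exact_mod_cast hs
  have hsk : 1 ≤ s ^ k := Nat.one_le_pow _ _ (by omega)
  have hsk1 : (1:ℝ) < ((s ^ k : ℕ) : ℝ) := by
    exact_mod_cast Nat.one_lt_pow (by omega) (by omega)
  have hMs := maxWinP_pos E s (by omega)
  have hMsk := maxWinP_pos E (s ^ k) hsk
  have h1 : Real.logb ((s ^ k : ℕ) : ℝ) ((maxWinP E s) ^ k) ≤
      Real.logb ((s ^ k : ℕ) : ℝ) (maxWinP E (s ^ k)) :=
    Real.logb_le_logb_of_le hsk1 (by positivity) (maxWinP_pow_le E s k (by omega) hk)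
  have h2 : Real.logb ((s ^ k : ℕ) : ℝ) ((maxWinP E s) ^ k) =
      Real.logb s (maxWinP E s) := by
    rw [Real.logb_pow]
    unfold Real.logb
    push_cast
    rw [Real.log_pow]
    have hls : Real.log s ≠ 0 := (Real.log_pos hs1).ne'
    have hk0 : (k:ℝ) ≠ 0 := by positivity
    field_simp
  unfold gn
  linarith

lemma gn_ge_logb_mul (m t : ℕ) (hm : 2 ≤ m) (hmt : m ≤ t) :
    Real.logb (t : ℝ) (m : ℝ) * gn E m ≤ gn E t := by
  set n := Fintype.card V with hn
  have ht2 : 2 ≤ t := le_trans hm hmt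
  have hm1 : (1:ℝ) < m := by exact_mod_cast hm
  have ht1 : (1:ℝ) < t := by exact_mod_cast ht2
  have hMm := maxWinP_pos E m (by omega)
  have hMt := maxWinP_pos E t (by omega)
  have hmn : (0:ℝ) < (m:ℝ) ^ n := by positivity
  have htn : (0:ℝ) < (t:ℝ) ^ n := by positivity
  have hc : (0:ℝ) < (m:ℝ) ^ n / (t:ℝ) ^ n := by positivity
  have h1 := maxWinP_mul_le E m t (by omega) hmt
  have h2 : Real.logb t (maxWinP E m * ((m:ℝ) ^ n / (t:ℝ) ^ n)) ≤
      Real.logb t (maxWinP E t) :=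
    Real.logb_le_logb_of_le ht1 (by positivity) h1
  rw [Real.logb_mul hMm.ne' hc.ne', Real.logb_div hmn.ne' htn.ne',
    Real.logb_pow, Real.logb_pow, Real.logb_self_eq_one ht1, mul_one] at h2
  have h3 : Real.logb t m * Real.logb m (maxWinP E m) = Real.logb t (maxWinP E m) := by
    unfold Real.logb
    have hlm : Real.log m ≠ 0 := (Real.log_pos hm1).ne'
    have hlt : Real.log t ≠ 0 := (Real.log_pos ht1).ne'
    field_simp
  unfold gn
  nlinarith [h2, h3]

end GnLemmas

/-- For integers `t ≥ s ≥ 2`, `gn(G,t) ≥ (⌊log_s t⌋ / log_s t)·gn(G,s)`;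
consequently for every `ε > 0` there is `t₀` with `gn(G,t) ≥ gn(G,s) − ε` for all `t ≥ t₀`. -/
theorem gn_almost_monotone {V : Type*} [Fintype V] (E : V → V → Prop) (hE : Irreflexive E)
    (s : ℕ) (hs : 2 ≤ s) :
    (∀ t : ℕ, s ≤ t →
      gn E t ≥ ((⌊Real.logb s t⌋₊ : ℝ) / Real.logb s t) * gn E s) ∧
    ∀ ε : ℝ, 0 < ε → ∃ t₀ : ℕ, ∀ t : ℕ, t₀ ≤ t → gn E t ≥ gn E s - ε := by
  have hs1 : (1:ℝ) < s := by exact_mod_cast hs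
  have main : ∀ t : ℕ, s ≤ t →
      gn E t ≥ ((⌊Real.logb s t⌋₊ : ℝ) / Real.logb s t) * gn E s := by
    intro t ht
    have ht2 : 2 ≤ t := le_trans hs ht
    have ht1 : (1:ℝ) < t := by exact_mod_cast ht2
    have hL1 : 1 ≤ Real.logb s t := by
      rw [Real.le_logb_iff_rpow_le hs1 (by positivity), Real.rpow_one]
      exact_mod_cast ht
    set L := Real.logb (s:ℝ) (t:ℝ) with hLdef
    set k := ⌊L⌋₊ with hkdef
    have hk1 : 1 ≤ k := Nat.le_floor (by exact_mod_cast hL1)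
    have hkL : (k:ℝ) ≤ L := Nat.floor_le (by linarith)
    have hpow : s ^ k ≤ t := by
      have h1 : ((s:ℝ)) ^ (k:ℝ) ≤ (s:ℝ) ^ L :=
        Real.rpow_le_rpow_of_exponent_le (le_of_lt hs1) hkL
      rw [hLdef, Real.rpow_logb (by positivity) (by linarith) (by positivity)] at h1
      have h2 : ((s ^ k : ℕ) : ℝ) ≤ (t : ℝ) := by
        push_cast
        rw [← Real.rpow_natCast]
        exact h1
      exact_mod_cast h2
    have hsk2 : 2 ≤ s ^ k := le_trans hs (Nat.le_self_pow (by omega) s)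
    have hchain := gn_ge_logb_mul E (s ^ k) t hsk2 hpow
    have hmono := gn_pow_ge E s k hs hk1
    have hnn : 0 ≤ Real.logb (t:ℝ) ((s ^ k : ℕ) : ℝ) := by
      apply Real.logb_nonneg ht1
      exact_mod_cast Nat.one_le_pow _ _ (by omega)
    have hstep : Real.logb (t:ℝ) ((s ^ k : ℕ) : ℝ) * gn E s ≤
        Real.logb (t:ℝ) ((s ^ k : ℕ) : ℝ) * gn E (s ^ k) :=
      mul_le_mul_of_nonneg_left hmono hnn
    have hble : Real.logb (t:ℝ) ((s ^ k : ℕ) : ℝ) = (k:ℝ) / L := by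
      rw [hLdef]
      unfold Real.logb
      push_cast
      rw [Real.log_pow]
      have hlt : Real.log t ≠ 0 := (Real.log_pos ht1).ne'
      have hls : Real.log s ≠ 0 := (Real.log_pos hs1).ne'
      field_simp
      try ring
    rw [hble] at hstep
    calc ((k:ℝ) / L) * gn E s ≤ Real.logb (t:ℝ) ((s ^ k : ℕ) : ℝ) * gn E (s ^ k) := by
          rw [hble]; exact hstep
      _ ≤ gn E t := hchain
  refine ⟨main, fun ε hε => ?_⟩
  refine ⟨max s (s ^ (⌈(Fintype.card V : ℝ) / ε⌉₊ + 1)), fun t ht => ?_⟩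
  set n := Fintype.card V with hn
  set N := ⌈(n : ℝ) / ε⌉₊ + 1 with hN
  have hts : s ≤ t := le_trans (le_max_left _ _) ht
  have ht2 : 2 ≤ t := le_trans hs hts
  have ht1 : (1:ℝ) < t := by exact_mod_cast ht2
  have hmain := main t hts
  set L := Real.logb (s:ℝ) (t:ℝ) with hLdef
  have hL1 : 1 ≤ L := by
    rw [hLdef, Real.le_logb_iff_rpow_le hs1 (by positivity), Real.rpow_one]
    exact_mod_cast hts
  have hL0 : 0 < L := by linarith
  have hLN : (N : ℝ) ≤ L := by
    rw [hLdef, Real.le_logb_iff_rpow_le hs1 (by positivity), Real.rpow_natCast]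
    exact_mod_cast le_trans (le_max_right s (s ^ N)) ht
  have hnL : (n : ℝ) ≤ ε * L := by
    have h1 : (n : ℝ) / ε ≤ (N : ℝ) := by
      rw [hN]
      push_cast
      linarith [Nat.le_ceil ((n : ℝ) / ε)]
    have h2 : (n : ℝ) / ε ≤ L := le_trans h1 hLN
    rw [div_le_iff₀ hε] at h2
    linarith
  have hg0 : 0 ≤ gn E s := gn_nonneg E s hs
  have hgn : gn E s ≤ (n : ℝ) := gn_le_card E s hs
  have hfl : L - 1 < (⌊L⌋₊ : ℝ) := Nat.sub_one_lt_floor L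
  have hstep : gn E s - ε ≤ ((⌊L⌋₊ : ℝ) / L) * gn E s := by
    rw [div_mul_eq_mul_div, le_div_iff₀ hL0]
    have hprod : (L - 1) * gn E s ≤ (⌊L⌋₊ : ℝ) * gn E s :=
      mul_le_mul_of_nonneg_right hfl.le hg0
    nlinarith [hprod, hnL, hgn, hg0, hL0]
  linarith [hmain, hstep]
end

section
/- Let X_G be a finite set of discrete random variables, and suppose a real-valued set function H on subsets of X_G satisfies: (i) H(Y) ≤ H(X_G) for all Y ⊆ X_G with |Y| = |X_G| − 1, and (ii) H(Y) + H(Z) − H(Y∪Z) − H(Y∩Z) ≥ 0 for all Y, Z ⊆ X_G with |Y| = |Z| = |Y∩Z| + 1. Then H satisfies all Shannon inequalities H(A∪C) + H(B∪C) − H(A∪B∪C) − H(C) ≥ 0 for all A, B, C ⊆ X_G, and conversely the Shannon inequalities imply (i) and (ii). -/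
section ShannonAux

variable {α : Type*} [Fintype α] [DecidableEq α] (H : Finset α → ℝ)

private lemma shannon_marg
    (h2 : ∀ Y Z : Finset α, Y.card = (Y ∩ Z).card + 1 → Z.card = (Y ∩ Z).card + 1 →
        H Y + H Z - H (Y ∪ Z) - H (Y ∩ Z) ≥ 0) :
    ∀ (n : ℕ) (S T : Finset α) (x : α), (T \ S).card = n → S ⊆ T → x ∉ T →
      H (insert x T) - H T ≤ H (insert x S) - H S := by
  intro n
  induction n with
  | zero =>
    intro S T x hc hST hx
    have : S = T := Finset.Subset.antisymm hST (by
      intro y hy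
      by_contra hyS
      have : y ∈ T \ S := Finset.mem_sdiff.mpr ⟨hy, hyS⟩
      simpa [Finset.card_eq_zero.mp hc] using this)
    simp [this]
  | succ n ih =>
    intro S T x hc hST hx
    have hne : (T \ S).Nonempty := by
      rw [← Finset.card_pos, hc]; omega
    obtain ⟨y, hy⟩ := hne
    have hyT : y ∈ T := (Finset.mem_sdiff.mp hy).1
    have hyS : y ∉ S := (Finset.mem_sdiff.mp hy).2
    set T' := T.erase y with hT'
    have hST' : S ⊆ T' := fun z hz => Finset.mem_erase.mpr ⟨fun h => hyS (h ▸ hz), hST hz⟩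
    have hxT' : x ∉ T' := fun h => hx (Finset.mem_of_mem_erase h)
    have hxy : x ≠ y := fun h => hx (h ▸ hyT)
    have hcard : (T' \ S).card = n := by
      have : T' \ S = (T \ S).erase y := by
        ext z; simp [hT', Finset.mem_erase, Finset.mem_sdiff]; tauto
      rw [this, Finset.card_erase_of_mem hy, hc]; omega
    have hyT' : y ∉ T' := Finset.notMem_erase y T
    have hTins : insert y T' = T := Finset.insert_erase hyT
    -- elementary submodularity with Y = insert x T', Z = T
    have hinter : (insert x T') ∩ T = T' := by
      ext z
      simp only [Finset.mem_inter, Finset.mem_insert]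
      constructor
      · rintro ⟨(rfl | hz), hzT⟩
        · exact absurd hzT hx
        · exact hz
      · intro hz; exact ⟨Or.inr hz, Finset.mem_of_mem_erase hz⟩
    have hunion : (insert x T') ∪ T = insert x T := by
      rw [← hTins]; ext z; simp [Finset.mem_union, Finset.mem_insert]; tauto
    have hcY : (insert x T').card = T'.card + 1 := Finset.card_insert_of_notMem hxT'
    have hcZ : T.card = T'.card + 1 := by
      rw [← hTins]; exact Finset.card_insert_of_notMem hyT'
    have h0 := h2 (insert x T') T (by rw [hinter]; exact hcY) (by rw [hinter]; exact hcZ)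
    rw [hinter, hunion] at h0
    have step : H (insert x T) - H T ≤ H (insert x T') - H T' := by linarith
    have := ih S T' x hcard hST' hxT'
    linarith

private lemma shannon_submod
    (h2 : ∀ Y Z : Finset α, Y.card = (Y ∩ Z).card + 1 → Z.card = (Y ∩ Z).card + 1 →
        H Y + H Z - H (Y ∪ Z) - H (Y ∩ Z) ≥ 0) :
    ∀ Y Z : Finset α, H Y + H Z - H (Y ∪ Z) - H (Y ∩ Z) ≥ 0 := by
  have aux : ∀ (A B C : Finset α), C ⊆ B → A ∩ B = ∅ →
      H (B ∪ A) - H B ≤ H (C ∪ A) - H C := by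
    intro A
    induction A using Finset.induction_on with
    | empty => intro B C _ _; simp
    | @insert x A' hxA ih =>
      intro B C hCB hAB
      have hxB : x ∉ B := by
        intro h
        have : x ∈ (insert x A') ∩ B := Finset.mem_inter.mpr ⟨Finset.mem_insert_self x A', h⟩
        simp [hAB] at this
      have hA'B : A' ∩ B = ∅ := by
        ext z
        simp only [Finset.mem_inter, Finset.notMem_empty, iff_false, not_and]
        intro hz hzB
        have : z ∈ (insert x A') ∩ B := Finset.mem_inter.mpr ⟨Finset.mem_insert_of_mem hz, hzB⟩
        simp [hAB] at this
      have hxBA' : x ∉ B ∪ A' := by simp [hxB, hxA]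
      have hsub : C ∪ A' ⊆ B ∪ A' := Finset.union_subset_union hCB Finset.Subset.rfl
      have hmarg := shannon_marg H h2 ((B ∪ A') \ (C ∪ A')).card (C ∪ A') (B ∪ A') x rfl
        hsub hxBA'
      have e1 : B ∪ insert x A' = insert x (B ∪ A') := Finset.union_insert x B A'
      have e2 : C ∪ insert x A' = insert x (C ∪ A') := Finset.union_insert x C A'
      have := ih B C hCB hA'B
      rw [e1, e2]
      linarith
  intro Y Z
  have h := aux (Y \ Z) Z (Y ∩ Z) Finset.inter_subset_right (Finset.sdiff_inter_self Z Y)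
  have e1 : Z ∪ (Y \ Z) = Y ∪ Z := by ext z; simp; tauto
  have e2 : (Y ∩ Z) ∪ (Y \ Z) = Y := by ext z; simp; tauto
  rw [e1, e2] at h
  linarith

end ShannonAux

/-- A set function `H` on the subsets of a finite ground set satisfies
all Shannon inequalities `H(A∪C) + H(B∪C) − H(A∪B∪C) − H(C) ≥ 0` if and only if it
satisfies (i) `H(Y) ≤ H(ground)` for all `Y` of size `|ground| − 1`, and (ii) the
elementary submodularity inequalities for `Y, Z` with `|Y| = |Z| = |Y∩Z| + 1`. -/
theorem shannon_reduction {α : Type*} [Fintype α] [DecidableEq α] (H : Finset α → ℝ) :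
    ((∀ Y : Finset α, Y.card = Fintype.card α - 1 → H Y ≤ H Finset.univ) ∧
      (∀ Y Z : Finset α, Y.card = (Y ∩ Z).card + 1 → Z.card = (Y ∩ Z).card + 1 →
        H Y + H Z - H (Y ∪ Z) - H (Y ∩ Z) ≥ 0)) ↔
    (∀ A B C : Finset α, H (A ∪ C) + H (B ∪ C) - H (A ∪ B ∪ C) - H C ≥ 0) := by
  constructor
  · rintro ⟨h1, h2⟩ A B C
    have submod := shannon_submod H h2
    -- single-element monotonicity
    have mono1 : ∀ (W : Finset α) (x : α), x ∉ W → H W ≤ H (insert x W) := by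
      intro W x hx
      have hxU : x ∉ Finset.univ.erase x := Finset.notMem_erase x _
      have hWU : W ⊆ Finset.univ.erase x :=
        fun z hz => Finset.mem_erase.mpr ⟨fun h => hx (h ▸ hz), Finset.mem_univ z⟩
      have hmarg := shannon_marg H h2 ((Finset.univ.erase x \ W).card) W
        (Finset.univ.erase x) x rfl hWU hxU
      have hins : insert x (Finset.univ.erase x) = Finset.univ :=
        Finset.insert_erase (Finset.mem_univ x)
      have hcard : (Finset.univ.erase x : Finset α).card = Fintype.card α - 1 := by
        rw [Finset.card_erase_of_mem (Finset.mem_univ x), Finset.card_univ]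
      have := h1 _ hcard
      rw [hins] at hmarg
      linarith
    have mono : ∀ Y Z : Finset α, Y ⊆ Z → H Y ≤ H Z := by
      have aux : ∀ (D Y : Finset α), H Y ≤ H (Y ∪ D) := by
        intro D
        induction D using Finset.induction_on with
        | empty => intro Y; simp
        | @insert x D' hxD ih =>
          intro Y
          by_cases hx : x ∈ Y ∪ D'
          · rw [Finset.union_insert, Finset.insert_eq_self.mpr hx]
            exact ih Y
          · rw [Finset.union_insert]
            exact le_trans (ih Y) (mono1 _ x hx)
      intro Y Z hYZ
      have := aux Z Y
      rwa [Finset.union_eq_right.mpr hYZ] at this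
    have hsub := submod (A ∪ C) (B ∪ C)
    have e1 : (A ∪ C) ∪ (B ∪ C) = A ∪ B ∪ C := by ext z; simp; tauto
    have hCsub : C ⊆ (A ∪ C) ∩ (B ∪ C) := by
      intro z hz; simp [hz]
    have := mono C _ hCsub
    rw [e1] at hsub
    linarith
  · intro hS
    constructor
    · intro Y _
      have := hS Yᶜ Yᶜ Y
      have e : Yᶜ ∪ Y = Finset.univ := by ext z; simp; tauto
      have e2 : Yᶜ ∪ Yᶜ ∪ Y = Finset.univ := by ext z; simp; tauto
      rw [e, e2] at this
      linarith
    · intro Y Z _ _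
      have := hS Y Z (Y ∩ Z)
      have e1 : Y ∪ Y ∩ Z = Y := Finset.union_eq_left.mpr Finset.inter_subset_left
      have e2 : Z ∪ Y ∩ Z = Z := Finset.union_eq_left.mpr Finset.inter_subset_right
      have e3 : Y ∪ Z ∪ Y ∩ Z = Y ∪ Z :=
        Finset.union_eq_left.mpr (Finset.inter_subset_left.trans Finset.subset_union_left)
      rw [e1, e2, e3] at this
      exact this
end
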